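/- Consider the closed-loop cable dynamics on [0,L]: functions V, W : [0,∞) × [0,L] → ℝ jointly continuous, with ∂V/∂t, ∂W/∂t, ∂V/∂s, ∂²V/∂s² existing and jointly continuous, satisfying for all t ≥ 0 and s ∈ [0,L]: τ·∂V/∂t = λ²·∂²V/∂s² − V − W + I and τ̃·∂W/∂t = −W + b·g(V), where the control current is I(t,s) = b·g(V(t,s)) + (1−β)·V(t,s) + β·V̄(s) − λ²·V̄''(s) for a twice continuously differentiable reference voltage V̄ : [0,L] → ℝ with V̄'(0) = V̄'(L) = 0, and with Neumann boundary conditions ∂V/∂s(t,0) = ∂V/∂s(t,L) = 0 for all t ≥ 0. Define the Lyapunov functional 𝓛₀(t) = (1/2)·∫₀ᴸ [ τ·(V(t,s) − V̄(s))² + τ̃·(W(t,s) − b·g(V̄(s)))² ] ds. If b ≥ 0, τ > 0, τ̃ > 0, λ > 0 and β > (b+1)²/4 + b, then 𝓛₀ is nonincreasing in t on [0,∞). -/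

import Mathlib

open Set MeasureTheory intervalIntegral
open scoped Interval

lemma relu_monotone_aux (x y : ℝ) : 0 ≤ (x - y) * (max x 0 - max y 0) := by
  rcases le_total x y with h | h
  · have h1 : x - y ≤ 0 := sub_nonpos.2 h
    have h2 : max x 0 - max y 0 ≤ 0 := sub_nonpos.2 (max_le_max h le_rfl)
    nlinarith
  · exact mul_nonneg (sub_nonneg.2 h) (sub_nonneg.2 (max_le_max h le_rfl))

lemma quad_bound_aux (b beta e w d : ℝ) (hb : 0 ≤ b)
    (hbeta : (b + 1) ^ 2 / 4 + b < beta) (hd : |d| ≤ |e|) (_hed : 0 ≤ e * d) :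
    2 * (-(beta * e ^ 2) - e * w + b * (e * d) - w ^ 2 + b * (w * d)) ≤ 0 := by
  have h2 : e * d ≤ e ^ 2 := by
    calc e * d ≤ |e * d| := le_abs_self _
      _ = |e| * |d| := abs_mul e d
      _ ≤ |e| * |e| := mul_le_mul_of_nonneg_left hd (abs_nonneg e)
      _ = e ^ 2 := by rw [← abs_mul, abs_mul_self, sq]
  have h3 : w * d ≤ |w| * |e| := by
    calc w * d ≤ |w * d| := le_abs_self _
      _ = |w| * |d| := abs_mul w d
      _ ≤ |w| * |e| := mul_le_mul_of_nonneg_left hd (abs_nonneg w)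
  have h4 : -(e * w) ≤ |w| * |e| := by
    calc -(e * w) ≤ |e * w| := neg_le_abs _
      _ = |e| * |w| := abs_mul e w
      _ = |w| * |e| := mul_comm _ _
  have h5 : |e| ^ 2 = e ^ 2 := sq_abs e
  have h6 : |w| ^ 2 = w ^ 2 := sq_abs w
  nlinarith [sq_nonneg (|w| - (b + 1) / 2 * |e|), abs_nonneg e, abs_nonneg w,
    mul_le_mul_of_nonneg_left h2 hb, mul_le_mul_of_nonneg_left h3 hb, sq_nonneg e]

/-- Asymptotic-stability part of the Appendix lemma for reference tracking control:
for the closed-loop cable dynamics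
`τ ∂V/∂t = λ² ∂²V/∂s² − V − W + I`, `τ̃ ∂W/∂t = −W + b g(V)` with
`I = b g(V) + (1−β) V + β V̄ − λ² V̄''` and Neumann boundary conditions, if
`b ≥ 0`, `τ, τ̃, λ > 0` and `β > (b+1)²/4 + b`, the Lyapunov functional
`𝓛₀(t) = ½ ∫₀ᴸ τ (V − V̄)² + τ̃ (W − b g(V̄))² ds` is nonincreasing on `[0, ∞)`. -/
theorem lyapunov_functional_nonincreasing
    (L lam tau tautil b beta : ℝ)
    (hL : 0 < L) (hlam : 0 < lam) (htau : 0 < tau) (htautil : 0 < tautil)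
    (hb : 0 ≤ b) (hbeta : (b + 1) ^ 2 / 4 + b < beta)
    (V W Vt Wt Vs Vss : ℝ → ℝ → ℝ)
    (Vbar Vbar' Vbar'' : ℝ → ℝ)
    -- the reference voltage is twice continuously differentiable with flat ends
    (hVbar : ∀ s ∈ Icc 0 L, HasDerivWithinAt Vbar (Vbar' s) (Icc 0 L) s)
    (hVbar' : ∀ s ∈ Icc 0 L, HasDerivWithinAt Vbar' (Vbar'' s) (Icc 0 L) s)
    (hVbar''cont : ContinuousOn Vbar'' (Icc 0 L))
    (hVbar0 : Vbar' 0 = 0) (hVbarL : Vbar' L = 0)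
    -- joint continuity of the solution and its partial derivatives
    (hVcont : ContinuousOn (fun p : ℝ × ℝ => V p.1 p.2) (Ici 0 ×ˢ Icc 0 L))
    (hWcont : ContinuousOn (fun p : ℝ × ℝ => W p.1 p.2) (Ici 0 ×ˢ Icc 0 L))
    (hVtcont : ContinuousOn (fun p : ℝ × ℝ => Vt p.1 p.2) (Ici 0 ×ˢ Icc 0 L))
    (hWtcont : ContinuousOn (fun p : ℝ × ℝ => Wt p.1 p.2) (Ici 0 ×ˢ Icc 0 L))
    (hVscont : ContinuousOn (fun p : ℝ × ℝ => Vs p.1 p.2) (Ici 0 ×ˢ Icc 0 L))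
    (hVsscont : ContinuousOn (fun p : ℝ × ℝ => Vss p.1 p.2) (Ici 0 ×ˢ Icc 0 L))
    -- partial derivatives
    (hVt : ∀ t ∈ Ici (0:ℝ), ∀ s ∈ Icc 0 L,
      HasDerivWithinAt (fun t' => V t' s) (Vt t s) (Ici 0) t)
    (hWt : ∀ t ∈ Ici (0:ℝ), ∀ s ∈ Icc 0 L,
      HasDerivWithinAt (fun t' => W t' s) (Wt t s) (Ici 0) t)
    (hVs : ∀ t ∈ Ici (0:ℝ), ∀ s ∈ Icc 0 L,
      HasDerivWithinAt (fun s' => V t s') (Vs t s) (Icc 0 L) s)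
    (hVss : ∀ t ∈ Ici (0:ℝ), ∀ s ∈ Icc 0 L,
      HasDerivWithinAt (fun s' => Vs t s') (Vss t s) (Icc 0 L) s)
    -- closed-loop cable dynamics with the reference tracking current control
    (hPDE_V : ∀ t ∈ Ici (0:ℝ), ∀ s ∈ Icc 0 L,
      tau * Vt t s = lam ^ 2 * Vss t s - V t s - W t s +
        (b * max (V t s) 0 + (1 - beta) * V t s + beta * Vbar s
          - lam ^ 2 * Vbar'' s))
    (hPDE_W : ∀ t ∈ Ici (0:ℝ), ∀ s ∈ Icc 0 L,
      tautil * Wt t s = -W t s + b * max (V t s) 0)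
    -- Neumann boundary conditions
    (hNeumann0 : ∀ t ∈ Ici (0:ℝ), Vs t 0 = 0)
    (hNeumannL : ∀ t ∈ Ici (0:ℝ), Vs t L = 0) :
    AntitoneOn
      (fun t => (1 / 2) * ∫ s in (0:ℝ)..L,
        (tau * (V t s - Vbar s) ^ 2 + tautil * (W t s - b * max (Vbar s) 0) ^ 2))
      (Ici 0) := by
  -- abbreviations
  set F : ℝ → ℝ → ℝ := fun t s =>
    tau * (V t s - Vbar s) ^ 2 + tautil * (W t s - b * max (Vbar s) 0) ^ 2 with hFdef
  set G : ℝ → ℝ → ℝ := fun t s =>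
    tau * (2 * (V t s - Vbar s) * Vt t s)
      + tautil * (2 * (W t s - b * max (Vbar s) 0) * Wt t s) with hGdef
  have hIcc : uIcc (0:ℝ) L = Icc 0 L := uIcc_of_le hL.le
  have intCC : ∀ {f : ℝ → ℝ}, ContinuousOn f (Icc 0 L) → IntervalIntegrable f volume 0 L := by
    intro f hf
    apply ContinuousOn.intervalIntegrable
    rwa [hIcc]
  have hIoc : Ι (0:ℝ) L = Ioc 0 L := uIoc_of_le hL.le
  -- basic continuity facts
  have hVbarC : ContinuousOn Vbar (Icc 0 L) := fun s hs => (hVbar s hs).continuousWithinAt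
  have hVbar'C : ContinuousOn Vbar' (Icc 0 L) := fun s hs => (hVbar' s hs).continuousWithinAt
  have hVbarP : ContinuousOn (fun p : ℝ × ℝ => Vbar p.2) (Ici 0 ×ˢ Icc 0 L) :=
    hVbarC.comp continuous_snd.continuousOn fun p hp => hp.2
  have hgVbarP : ContinuousOn (fun p : ℝ × ℝ => b * max (Vbar p.2) 0) (Ici 0 ×ˢ Icc 0 L) :=
    continuousOn_const.mul ((continuous_id'.max continuous_const).comp_continuousOn hVbarP)
  have heP : ContinuousOn (fun p : ℝ × ℝ => V p.1 p.2 - Vbar p.2) (Ici 0 ×ˢ Icc 0 L) :=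
    hVcont.sub hVbarP
  have hwP : ContinuousOn (fun p : ℝ × ℝ => W p.1 p.2 - b * max (Vbar p.2) 0)
      (Ici 0 ×ˢ Icc 0 L) := hWcont.sub hgVbarP
  have hFP : ContinuousOn (fun p : ℝ × ℝ => F p.1 p.2) (Ici 0 ×ˢ Icc 0 L) := by
    simp only [hFdef]
    exact (continuousOn_const.mul (heP.pow 2)).add (continuousOn_const.mul (hwP.pow 2))
  have hGP : ContinuousOn (fun p : ℝ × ℝ => G p.1 p.2) (Ici 0 ×ˢ Icc 0 L) := by
    simp only [hGdef]
    exact (continuousOn_const.mul ((continuousOn_const.mul heP).mul hVtcont)).add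
      (continuousOn_const.mul ((continuousOn_const.mul hwP).mul hWtcont))
  -- slices
  have hslice : ∀ {f : ℝ × ℝ → ℝ}, ContinuousOn f (Ici 0 ×ˢ Icc 0 L) →
      ∀ t ∈ Ici (0:ℝ), ContinuousOn (fun s => f (t, s)) (Icc 0 L) := by
    intro f hf t ht
    exact hf.comp (Continuous.continuousOn (by fun_prop)) fun s hs => ⟨ht, hs⟩
  have hFslice : ∀ t ∈ Ici (0:ℝ), ContinuousOn (F t) (Icc 0 L) := fun t ht =>
    hslice hFP t ht
  have hGslice : ∀ t ∈ Ici (0:ℝ), ContinuousOn (G t) (Icc 0 L) := fun t ht =>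
    hslice hGP t ht
  have hFint : ∀ t ∈ Ici (0:ℝ), IntervalIntegrable (F t) volume 0 L := fun t ht =>
    intCC (hFslice t ht)
  have hFmeas : ∀ t ∈ Ici (0:ℝ), AEStronglyMeasurable (F t) (volume.restrict (Ι 0 L)) := by
    intro t ht
    rw [hIoc]
    exact ((hFslice t ht).mono Ioc_subset_Icc_self).aestronglyMeasurable measurableSet_Ioc
  have hGmeas : ∀ t ∈ Ici (0:ℝ), AEStronglyMeasurable (G t) (volume.restrict (Ι 0 L)) := by
    intro t ht
    rw [hIoc]
    exact ((hGslice t ht).mono Ioc_subset_Icc_self).aestronglyMeasurable measurableSet_Ioc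
  -- differentiation under the integral sign
  have hderiv : ∀ t₀ ∈ Ioi (0:ℝ), HasDerivAt (fun t => ∫ s in (0:ℝ)..L, F t s)
      (∫ s in (0:ℝ)..L, G t₀ s) t₀ := by
    intro t₀ ht₀
    have ht₀' : (0:ℝ) < t₀ := ht₀
    have hK : Icc (t₀/2) (t₀+1) ×ˢ Icc (0:ℝ) L ⊆ Ici 0 ×ˢ Icc 0 L := by
      apply prod_mono _ Subset.rfl
      intro x hx
      have : (0:ℝ) ≤ t₀/2 := by linarith
      exact le_trans this hx.1
    obtain ⟨M, hM⟩ := (isCompact_Icc.prod isCompact_Icc).exists_bound_of_continuousOn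
      (hGP.mono hK)
    have hε : (0:ℝ) < min (t₀/2) 1 := lt_min (by linarith) one_pos
    have hball : ∀ x ∈ Metric.ball t₀ (min (t₀/2) 1), x ∈ Icc (t₀/2) (t₀+1) := by
      intro x hx
      rw [Metric.mem_ball, Real.dist_eq] at hx
      have h1 := abs_lt.1 hx
      constructor
      · have := lt_of_lt_of_le hx (min_le_left _ _)
        have := abs_lt.1 this
        linarith
      · have := lt_of_lt_of_le hx (min_le_right _ _)
        have := abs_lt.1 this
        linarith
    have hballpos : ∀ x ∈ Metric.ball t₀ (min (t₀/2) 1), (0:ℝ) < x := by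
      intro x hx
      have := (hball x hx).1
      linarith
    refine (intervalIntegral.hasDerivAt_integral_of_dominated_loc_of_deriv_le (bound := fun _ => M) (Metric.ball_mem_nhds t₀ hε)
      ?_ (hFint t₀ ht₀'.le) (hGmeas t₀ ht₀'.le) ?_ ?_ ?_).2
    · filter_upwards [Ioi_mem_nhds ht₀'] with x hx
      exact hFmeas x (mem_Ici.2 (le_of_lt (mem_Ioi.1 hx)))
    · refine Filter.Eventually.of_forall fun s hs x hx => ?_
      have hs' : s ∈ Icc 0 L := Ioc_subset_Icc_self (hIoc ▸ hs)
      exact hM (x, s) ⟨hball x hx, hs'⟩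
    · exact intervalIntegrable_const
    · refine Filter.Eventually.of_forall fun s hs x hx => ?_
      have hs' : s ∈ Icc 0 L := Ioc_subset_Icc_self (hIoc ▸ hs)
      have hx0 : (0:ℝ) < x := hballpos x hx
      have h1 : HasDerivAt (fun t => V t s) (Vt x s) x :=
        (hVt x hx0.le s hs').hasDerivAt (Ici_mem_nhds hx0)
      have h2 : HasDerivAt (fun t => W t s) (Wt x s) x :=
        (hWt x hx0.le s hs').hasDerivAt (Ici_mem_nhds hx0)
      have hA : HasDerivAt (fun t => (V t s - Vbar s) ^ 2)
          (2 * (V x s - Vbar s) * Vt x s) x := by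
        have := (h1.sub_const (Vbar s)).fun_pow 2
        exact this.congr_deriv (by ring)
      have hB : HasDerivAt (fun t => (W t s - b * max (Vbar s) 0) ^ 2)
          (2 * (W x s - b * max (Vbar s) 0) * Wt x s) x := by
        have := (h2.sub_const (b * max (Vbar s) 0)).fun_pow 2
        exact this.congr_deriv (by ring)
      exact (hA.const_mul tau).add (hB.const_mul tautil)
  -- nonpositivity of the derivative
  have hGnonpos : ∀ t ∈ Ici (0:ℝ), (∫ s in (0:ℝ)..L, G t s) ≤ 0 := by
    intro t ht
    -- slice continuity in s
    have hVsl : ContinuousOn (fun s => V t s) (Icc 0 L) := hslice hVcont t ht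
    have hWsl : ContinuousOn (fun s => W t s) (Icc 0 L) := hslice hWcont t ht
    have hVssl : ContinuousOn (fun s => Vs t s) (Icc 0 L) := hslice hVscont t ht
    have hVsssl : ContinuousOn (fun s => Vss t s) (Icc 0 L) := hslice hVsscont t ht
    -- integration by parts
    set cross : ℝ → ℝ := fun s => (V t s - Vbar s) * (Vss t s - Vbar'' s) with hcrossdef
    set sqd : ℝ → ℝ := fun s => (Vs t s - Vbar' s) ^ 2 with hsqddef
    have hcrossC : ContinuousOn cross (Icc 0 L) :=
      (hVsl.sub hVbarC).mul (hVsssl.sub hVbar''cont)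
    have hsqdC : ContinuousOn sqd (Icc 0 L) := ((hVssl.sub hVbar'C).pow 2)
    have hcrossInt : IntervalIntegrable cross volume 0 L :=
      intCC hcrossC
    have hsqdInt : IntervalIntegrable sqd volume 0 L :=
      intCC hsqdC
    have hibp : (∫ s in (0:ℝ)..L, (sqd s + cross s)) = 0 := by
      have hcont : ContinuousOn (fun s => (V t s - Vbar s) * (Vs t s - Vbar' s)) (Icc 0 L) :=
        (hVsl.sub hVbarC).mul (hVssl.sub hVbar'C)
      have hd : ∀ s ∈ Ioo (0:ℝ) L,
          HasDerivWithinAt (fun s' => (V t s' - Vbar s') * (Vs t s' - Vbar' s'))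
            (sqd s + cross s) (Ioi s) s := by
        intro s hs
        have hsIcc : s ∈ Icc (0:ℝ) L := Ioo_subset_Icc_self hs
        have hnbhd : Icc (0:ℝ) L ∈ nhds s := Icc_mem_nhds hs.1 hs.2
        have d1 : HasDerivAt (fun s' => V t s') (Vs t s) s :=
          (hVs t ht s hsIcc).hasDerivAt hnbhd
        have d2 : HasDerivAt (fun s' => Vs t s') (Vss t s) s :=
          (hVss t ht s hsIcc).hasDerivAt hnbhd
        have d3 : HasDerivAt Vbar (Vbar' s) s := (hVbar s hsIcc).hasDerivAt hnbhd
        have d4 : HasDerivAt Vbar' (Vbar'' s) s := (hVbar' s hsIcc).hasDerivAt hnbhd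
        have := (d1.sub d3).mul (d2.sub d4)
        have heq : (Vs t s - Vbar' s) * (Vs t s - Vbar' s)
            + (V t s - Vbar s) * (Vss t s - Vbar'' s) = sqd s + cross s := by
          simp only [hsqddef, hcrossdef]; ring
        exact (heq ▸ this).hasDerivWithinAt
      have := intervalIntegral.integral_eq_sub_of_hasDeriv_right_of_le hL.le hcont hd
        (hsqdInt.add hcrossInt)
      rw [this]
      have hL' : L ∈ Icc (0:ℝ) L := ⟨hL.le, le_rfl⟩
      have h0' : (0:ℝ) ∈ Icc (0:ℝ) L := ⟨le_rfl, hL.le⟩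
      rw [hNeumann0 t ht, hNeumannL t ht, hVbar0, hVbarL]
      ring
    have hcrossVal : (∫ s in (0:ℝ)..L, cross s) = -∫ s in (0:ℝ)..L, sqd s := by
      rw [intervalIntegral.integral_add hsqdInt hcrossInt] at hibp
      linarith
    have hsqdNonneg : 0 ≤ ∫ s in (0:ℝ)..L, sqd s :=
      intervalIntegral.integral_nonneg hL.le fun s _ => sq_nonneg _
    -- pointwise identity from the PDE
    set Q : ℝ → ℝ := fun s =>
      2 * (-(beta * (V t s - Vbar s) ^ 2)
        - (V t s - Vbar s) * (W t s - b * max (Vbar s) 0)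
        + b * ((V t s - Vbar s) * (max (V t s) 0 - max (Vbar s) 0))
        - (W t s - b * max (Vbar s) 0) ^ 2
        + b * ((W t s - b * max (Vbar s) 0) * (max (V t s) 0 - max (Vbar s) 0))) with hQdef
    have hQC : ContinuousOn Q (Icc 0 L) := by
      simp only [hQdef]
      have hmaxV : ContinuousOn (fun s => max (V t s) 0) (Icc 0 L) :=
        (continuous_id'.max continuous_const).comp_continuousOn hVsl
      have hmaxVbar : ContinuousOn (fun s => max (Vbar s) 0) (Icc 0 L) :=
        (continuous_id'.max continuous_const).comp_continuousOn hVbarC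
      have he : ContinuousOn (fun s => V t s - Vbar s) (Icc 0 L) := hVsl.sub hVbarC
      have hw : ContinuousOn (fun s => W t s - b * max (Vbar s) 0) (Icc 0 L) :=
        hWsl.sub (continuousOn_const.mul hmaxVbar)
      have hd : ContinuousOn (fun s => max (V t s) 0 - max (Vbar s) 0) (Icc 0 L) :=
        hmaxV.sub hmaxVbar
      fun_prop
    have hQInt : IntervalIntegrable Q volume 0 L := intCC hQC
    have hGeq : EqOn (G t) (fun s => 2 * lam ^ 2 * cross s + Q s) (uIcc 0 L) := by
      intro s hs
      have hs' : s ∈ Icc 0 L := hIcc ▸ hs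
      have e1 := hPDE_V t ht s hs'
      have e2 := hPDE_W t ht s hs'
      simp only [hGdef, hQdef, hcrossdef]
      linear_combination (2 * (V t s - Vbar s)) * e1 + (2 * (W t s - b * max (Vbar s) 0)) * e2
    have hQnonpos : (∫ s in (0:ℝ)..L, Q s) ≤ 0 := by
      have : (∫ s in (0:ℝ)..L, Q s) ≤ ∫ s in (0:ℝ)..L, (0:ℝ) := by
        apply intervalIntegral.integral_mono_on hL.le hQInt intervalIntegrable_const
        intro s hs
        simp only [hQdef]
        exact quad_bound_aux b beta (V t s - Vbar s) (W t s - b * max (Vbar s) 0)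
          (max (V t s) 0 - max (Vbar s) 0) hb hbeta
          (abs_max_sub_max_le_abs _ _ _) (relu_monotone_aux _ _)
      simpa using this
    calc (∫ s in (0:ℝ)..L, G t s)
        = ∫ s in (0:ℝ)..L, (2 * lam ^ 2 * cross s + Q s) :=
          intervalIntegral.integral_congr hGeq
      _ = 2 * lam ^ 2 * (∫ s in (0:ℝ)..L, cross s) + ∫ s in (0:ℝ)..L, Q s := by
          rw [intervalIntegral.integral_add ((hcrossInt.const_mul _)) hQInt,
            intervalIntegral.integral_const_mul]
      _ = 2 * lam ^ 2 * (-(∫ s in (0:ℝ)..L, sqd s)) + ∫ s in (0:ℝ)..L, Q s := by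
          rw [hcrossVal]
      _ ≤ 0 := by nlinarith [sq_nonneg lam]
  -- continuity of the integral on [0, ∞)
  have hcontI : ContinuousOn (fun t => ∫ s in (0:ℝ)..L, F t s) (Ici 0) := by
    intro t₀ ht₀
    have hK : Icc (0:ℝ) (t₀+1) ×ˢ Icc (0:ℝ) L ⊆ Ici 0 ×ˢ Icc 0 L :=
      prod_mono (fun x hx => hx.1) Subset.rfl
    obtain ⟨M, hM⟩ := (isCompact_Icc.prod isCompact_Icc).exists_bound_of_continuousOn
      (hFP.mono hK)
    have hnear : Iio (t₀+1) ∩ Ici 0 ∈ nhdsWithin t₀ (Ici 0) :=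
      Filter.inter_mem (mem_nhdsWithin_of_mem_nhds (Iio_mem_nhds (by linarith)))
        self_mem_nhdsWithin
    apply intervalIntegral.continuousWithinAt_of_dominated_interval
      (bound := fun _ => M)
    · filter_upwards [hnear] with x hx
      exact hFmeas x hx.2
    · filter_upwards [hnear] with x hx
      refine Filter.Eventually.of_forall fun s hs => ?_
      have hs' : s ∈ Icc 0 L := Ioc_subset_Icc_self (hIoc ▸ hs)
      exact hM (x, s) ⟨⟨hx.2, le_of_lt hx.1⟩, hs'⟩
    · exact intervalIntegrable_const
    · refine Filter.Eventually.of_forall fun s hs => ?_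
      have hs' : s ∈ Icc 0 L := Ioc_subset_Icc_self (hIoc ▸ hs)
      have : ContinuousWithinAt (fun p : ℝ × ℝ => F p.1 p.2) (Ici 0 ×ˢ Icc 0 L) (t₀, s) :=
        hFP (t₀, s) ⟨ht₀, hs'⟩
      have hmk : ContinuousWithinAt (fun x : ℝ => ((x, s) : ℝ × ℝ)) (Ici 0) t₀ :=
        (continuous_id.prodMk continuous_const).continuousWithinAt
      exact ContinuousWithinAt.comp (g := fun p : ℝ × ℝ => F p.1 p.2)
        (f := fun x : ℝ => ((x, s) : ℝ × ℝ)) this hmk fun x hx => ⟨hx, hs'⟩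
  -- assemble
  have hAnti : AntitoneOn (fun t => ∫ s in (0:ℝ)..L, F t s) (Ici 0) := by
    apply antitoneOn_of_deriv_nonpos (convex_Ici 0) hcontI
    · rw [interior_Ici]
      exact fun t₀ ht₀ => (hderiv t₀ ht₀).differentiableAt.differentiableWithinAt
    · rw [interior_Ici]
      intro t₀ ht₀
      rw [(hderiv t₀ ht₀).deriv]
      exact hGnonpos t₀ (mem_Ici.2 (le_of_lt (mem_Ioi.1 ht₀)))
  intro x hx y hy hxy
  have h := hAnti hx hy hxy
  simp only [hFdef] at h
  simp only
  linarith
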